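/- Let A be a discrete almost periodic set in ℝ^p of finite type (i.e., the difference set A − A is discrete). Then A is an ideal crystal: there exist a full rank lattice L ⊆ ℝ^p and a finite set F ⊆ ℝ^p such that A = L + F. -/

import Mathlib

open Pointwise

noncomputable section

/-- A set `S ⊆ ℝ^p` is relatively dense if there is `R` such that every ball of
radius `R` contains a point of `S`. -/
def RelativelyDense {p : ℕ} (S : Set (EuclideanSpace ℝ (Fin p))) : Prop :=
  ∃ R : ℝ, ∀ x : EuclideanSpace ℝ (Fin p), ∃ s ∈ S, dist x s ≤ R

/-- A set `A ⊆ ℝ^p` is discrete: closed with finite intersection with every compact set. -/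
def DiscreteSet {p : ℕ} (A : Set (EuclideanSpace ℝ (Fin p))) : Prop :=
  IsClosed A ∧ ∀ K : Set (EuclideanSpace ℝ (Fin p)), IsCompact K → (A ∩ K).Finite

/-- `τ` is an `ε`-almost period of `A`: there is a bijection `σ : A → A` with
`|a + τ - σ a| < ε` for all `a ∈ A`. -/
def IsAlmostPeriodOf {p : ℕ} (A : Set (EuclideanSpace ℝ (Fin p))) (ε : ℝ)
    (τ : EuclideanSpace ℝ (Fin p)) : Prop :=
  ∃ σ : A ≃ A, ∀ a : A,
    ‖(a : EuclideanSpace ℝ (Fin p)) + τ - (σ a : EuclideanSpace ℝ (Fin p))‖ < ε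

/-- `A` is an almost periodic set: for every `ε > 0` its set of `ε`-almost periods is
relatively dense. -/
def AlmostPeriodicSet {p : ℕ} (A : Set (EuclideanSpace ℝ (Fin p))) : Prop :=
  ∀ ε : ℝ, 0 < ε → RelativelyDense {τ | IsAlmostPeriodOf A ε τ}

/-- `L` is a full rank lattice: the set of integer linear combinations of `p` linearly
independent vectors of `ℝ^p`. -/
def IsFullRankLattice {p : ℕ} (L : Set (EuclideanSpace ℝ (Fin p))) : Prop :=
  ∃ T : Fin p → EuclideanSpace ℝ (Fin p), LinearIndependent ℝ T ∧
    L = {x | ∃ n : Fin p → ℤ, x = ∑ i, (n i : ℝ) • T i}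

namespace IdealCrystalAux

variable {p : ℕ}

/-- The group of exact periods of a set. -/
def periodGroup (A : Set (EuclideanSpace ℝ (Fin p))) :
    AddSubgroup (EuclideanSpace ℝ (Fin p)) where
  carrier := {t | ∀ x : EuclideanSpace ℝ (Fin p), x + t ∈ A ↔ x ∈ A}
  zero_mem' := by intro x; simp
  add_mem' := by
    intro a b ha hb x
    rw [← add_assoc]
    exact (hb (x + a)).trans (ha x)
  neg_mem' := by
    intro a ha x
    have h := ha (x + -a)
    rw [add_assoc, neg_add_cancel, add_zero] at h
    exact h.symm

lemma mem_periodGroup {A : Set (EuclideanSpace ℝ (Fin p))}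
    {t : EuclideanSpace ℝ (Fin p)} :
    t ∈ periodGroup A ↔ ∀ x : EuclideanSpace ℝ (Fin p), x + t ∈ A ↔ x ∈ A := Iff.rfl

/-- A finite set has a positive separation constant. -/
lemma exists_sep {S : Set (EuclideanSpace ℝ (Fin p))} (hS : S.Finite) :
    ∃ δ : ℝ, 0 < δ ∧ ∀ x ∈ S, ∀ y ∈ S, x ≠ y → δ ≤ dist x y := by
  classical
  set P : Set (EuclideanSpace ℝ (Fin p) × EuclideanSpace ℝ (Fin p)) :=
    {q | q.1 ∈ S ∧ q.2 ∈ S ∧ q.1 ≠ q.2} with hP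
  have hPfin : P.Finite := (hS.prod hS).subset (by rintro ⟨x, y⟩ ⟨h1, h2, _⟩; exact ⟨h1, h2⟩)
  rcases P.eq_empty_or_nonempty with h | h
  · refine ⟨1, one_pos, fun x hx y hy hxy => absurd ?_ (by simp [h] : (x, y) ∉ P)⟩
    exact ⟨hx, hy, hxy⟩
  · obtain ⟨q, hq, hmin⟩ := Set.exists_min_image P (fun q => dist q.1 q.2) hPfin h
    exact ⟨dist q.1 q.2, dist_pos.2 hq.2.2, fun x hx y hy hxy => hmin (x, y) ⟨hx, hy, hxy⟩⟩

/-- Chain-connectivity argument: a function on a relatively dense set that is locally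
constant at scale `3R` is constant. -/
lemma chain_reach {A : Set (EuclideanSpace ℝ (Fin p))} {R : ℝ} (hR : 0 < R)
    (hcov : ∀ x : EuclideanSpace ℝ (Fin p), ∃ a ∈ A, dist x a ≤ R)
    (d : EuclideanSpace ℝ (Fin p) → EuclideanSpace ℝ (Fin p))
    (hloc : ∀ a ∈ A, ∀ b ∈ A, dist a b ≤ 3 * R → d a = d b) :
    ∀ a ∈ A, ∀ b ∈ A, d a = d b := by
  suffices H : ∀ n : ℕ, ∀ a ∈ A, ∀ b ∈ A, dist a b ≤ n * R + 2 * R → d a = d b by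
    intro a ha b hb
    obtain ⟨n, hn⟩ := exists_nat_ge (dist a b / R)
    have : dist a b ≤ n * R := by
      rw [div_le_iff₀ hR] at hn; linarith
    exact H n a ha b hb (by linarith)
  intro n
  induction n with
  | zero =>
    intro a ha b hb h
    exact hloc a ha b hb (by push_cast at h; linarith)
  | succ n ih =>
    intro a ha b hb h
    by_cases hle : dist a b ≤ 3 * R
    · exact hloc a ha b hb hle
    · push_neg at hle
      set D := dist a b with hD
      have hDpos : 0 < D := lt_trans (by linarith) hle
      set s : ℝ := 2 * R / D with hs
      have hs0 : 0 ≤ s := by positivity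
      have hs1 : s ≤ 1 := by
        rw [hs, div_le_one hDpos]; linarith
      set x : EuclideanSpace ℝ (Fin p) := b + s • (a - b) with hx
      have hxb : dist x b = 2 * R := by
        rw [dist_eq_norm, hx, add_sub_cancel_left, norm_smul, Real.norm_eq_abs,
          abs_of_nonneg hs0, hs, ← dist_eq_norm, ← hD]
        field_simp
      have hxa : dist a x = D - 2 * R := by
        have hax : a - x = (1 - s) • (a - b) := by
          rw [hx, sub_smul, one_smul]; abel
        rw [dist_eq_norm, hax, norm_smul, Real.norm_eq_abs, abs_of_nonneg (by linarith),
          ← dist_eq_norm, ← hD, hs]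
        field_simp
      obtain ⟨c, hc, hcx⟩ := hcov x
      have h1 : dist a c ≤ n * R + 2 * R := by
        have := dist_triangle a x c
        have hnr : D ≤ (n + 1) * R + 2 * R := by push_cast at h ⊢; linarith
        linarith
      have h2 : dist c b ≤ 3 * R := by
        have := dist_triangle c x b
        rw [dist_comm c x] at this
        linarith
      exact (ih a ha c hc h1).trans (hloc c hc b hb h2)

end IdealCrystalAux

open IdealCrystalAux

/-- Any discrete almost periodic set of finite type is an ideal crystal. -/
theorem discrete_almostPeriodic_finiteType_isIdealCrystal {p : ℕ}
    (A : Set (EuclideanSpace ℝ (Fin p)))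
    (hdisc : DiscreteSet A) (hap : AlmostPeriodicSet A)
    (hft : DiscreteSet (A - A)) :
    ∃ (L F : Set (EuclideanSpace ℝ (Fin p))),
      IsFullRankLattice L ∧ F.Finite ∧ A = L + F := by
  classical
  rcases A.eq_empty_or_nonempty with hA | ⟨a₀, ha₀⟩
  · -- empty case: any full rank lattice plus the empty set
    set bE : Module.Basis (Fin p) ℝ (EuclideanSpace ℝ (Fin p)) :=
      (EuclideanSpace.basisFun (Fin p) ℝ).toBasis with hbE
    refine ⟨{x | ∃ n : Fin p → ℤ, x = ∑ i, (n i : ℝ) • bE i}, ∅,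
      ⟨fun i => bE i, bE.linearIndependent, rfl⟩, Set.finite_empty, ?_⟩
    rw [Set.add_empty]; exact hA
  -- main case: A nonempty
  obtain ⟨R₁, hR₁⟩ := hap 1 one_pos
  set R : ℝ := |R₁| + 1 with hRdef
  have hRpos : 0 < R := by positivity
  have hcov : ∀ x : EuclideanSpace ℝ (Fin p), ∃ a ∈ A, dist x a ≤ R := by
    intro x
    obtain ⟨τ, hτ, hdist⟩ := hR₁ (x - a₀)
    obtain ⟨σ, hσ⟩ := hτ
    refine ⟨(σ ⟨a₀, ha₀⟩ : EuclideanSpace ℝ (Fin p)), (σ ⟨a₀, ha₀⟩).2, ?_⟩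
    have h1 := hσ ⟨a₀, ha₀⟩
    have h2 : dist x (a₀ + τ) = dist (x - a₀) τ := by
      rw [dist_eq_norm, dist_eq_norm]; congr 1; abel
    have h3 : dist (a₀ + τ) ((σ ⟨a₀, ha₀⟩ : EuclideanSpace ℝ (Fin p))) < 1 := by
      rw [dist_eq_norm]; exact h1
    calc dist x (σ ⟨a₀, ha₀⟩ : EuclideanSpace ℝ (Fin p))
        ≤ dist x (a₀ + τ) + dist (a₀ + τ) (σ ⟨a₀, ha₀⟩ : EuclideanSpace ℝ (Fin p)) :=
          dist_triangle _ _ _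
      _ ≤ |R₁| + 1 := by
          have h4 : dist (x - a₀) τ ≤ |R₁| := le_trans hdist (le_abs_self _)
          rw [h2]; linarith
  -- separation constant for differences in a large ball
  have hF₀ : ((A - A) ∩ Metric.closedBall 0 (3 * R + 1)).Finite :=
    hft.2 _ (isCompact_closedBall _ _)
  obtain ⟨δ, hδpos, hδ⟩ := exists_sep hF₀
  set ε : ℝ := min δ 1 / 3 with hε
  have hmpos : 0 < min δ 1 := lt_min hδpos one_pos
  have hεpos : 0 < ε := by rw [hε]; linarith
  have hε2δ : 2 * ε < δ := by
    have h1 : min δ 1 ≤ δ := min_le_left _ _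
    rw [hε]; linarith
  have hε13 : ε ≤ 1 / 3 := by
    have := min_le_right δ 1
    rw [hε]; linarith
  -- key step: every ε-almost period is within ε of an exact period
  have key : ∀ τ : EuclideanSpace ℝ (Fin p), IsAlmostPeriodOf A ε τ →
      ∃ t ∈ periodGroup A, ‖t - τ‖ < ε := by
    rintro τ ⟨σ, hσ⟩
    set d : EuclideanSpace ℝ (Fin p) → EuclideanSpace ℝ (Fin p) :=
      fun x => if hx : x ∈ A then ((σ ⟨x, hx⟩ : EuclideanSpace ℝ (Fin p)) - x) else 0 with hd
    have hdval : ∀ (x : EuclideanSpace ℝ (Fin p)) (hx : x ∈ A),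
        d x = (σ ⟨x, hx⟩ : EuclideanSpace ℝ (Fin p)) - x := by
      intro x hx; rw [hd]; simp only [dif_pos hx]
    have hloc : ∀ a ∈ A, ∀ b ∈ A, dist a b ≤ 3 * R → d a = d b := by
      intro a ha b hb hab
      have habn : ‖a - b‖ ≤ 3 * R := by rw [← dist_eq_norm]; exact hab
      have hu : a - b ∈ (A - A) ∩ Metric.closedBall 0 (3 * R + 1) := by
        refine ⟨Set.sub_mem_sub ha hb, ?_⟩
        rw [Metric.mem_closedBall, dist_zero_right]
        linarith
      set fa : EuclideanSpace ℝ (Fin p) := (σ ⟨a, ha⟩ : EuclideanSpace ℝ (Fin p)) with hfa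
      set fb : EuclideanSpace ℝ (Fin p) := (σ ⟨b, hb⟩ : EuclideanSpace ℝ (Fin p)) with hfb
      have hva : ‖a + τ - fa‖ < ε := hσ ⟨a, ha⟩
      have hvb : ‖b + τ - fb‖ < ε := hσ ⟨b, hb⟩
      have hvu : ‖(fa - fb) - (a - b)‖ < 2 * ε := by
        have heq : (fa - fb) - (a - b) = (b + τ - fb) - (a + τ - fa) := by abel
        rw [heq]
        calc ‖(b + τ - fb) - (a + τ - fa)‖ ≤ ‖b + τ - fb‖ + ‖a + τ - fa‖ := norm_sub_le _ _
          _ < 2 * ε := by linarith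
      have hv : fa - fb ∈ (A - A) ∩ Metric.closedBall 0 (3 * R + 1) := by
        refine ⟨Set.sub_mem_sub (σ ⟨a, ha⟩).2 (σ ⟨b, hb⟩).2, ?_⟩
        rw [Metric.mem_closedBall, dist_zero_right]
        have h5 : ‖fa - fb‖ ≤ ‖(fa - fb) - (a - b)‖ + ‖a - b‖ := by
          have := norm_add_le ((fa - fb) - (a - b)) (a - b)
          rw [sub_add_cancel] at this
          exact this
        linarith
      have heq : fa - fb = a - b := by
        by_contra hne
        have hsep := hδ _ hv _ hu hne
        rw [dist_eq_norm] at hsep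
        linarith
      rw [hdval a ha, hdval b hb, ← hfa, ← hfb]
      rw [sub_eq_sub_iff_add_eq_add] at heq ⊢
      rw [heq]; abel
    have hconst := chain_reach hRpos hcov d hloc
    set t : EuclideanSpace ℝ (Fin p) := d a₀ with ht
    have htval : t = (σ ⟨a₀, ha₀⟩ : EuclideanSpace ℝ (Fin p)) - a₀ := by
      rw [ht, hdval a₀ ha₀]
    refine ⟨t, ?_, ?_⟩
    · intro x
      constructor
      · intro hxt
        set y := σ.symm ⟨x + t, hxt⟩ with hy
        have hy2 : (σ y : EuclideanSpace ℝ (Fin p)) = x + t := by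
          rw [hy, Equiv.apply_symm_apply]
        have hdy : d (y : EuclideanSpace ℝ (Fin p)) = t := hconst _ y.2 _ ha₀
        rw [hdval _ y.2] at hdy
        have hyx : (σ y : EuclideanSpace ℝ (Fin p)) - (y : EuclideanSpace ℝ (Fin p)) = t := hdy
        have : x = (y : EuclideanSpace ℝ (Fin p)) := by
          rw [hy2] at hyx
          rw [sub_eq_iff_eq_add, add_comm x t] at hyx
          exact add_left_cancel hyx
        rw [this]; exact y.2
      · intro hx
        have hdx : d x = t := hconst x hx a₀ ha₀
        rw [hdval x hx] at hdx
        have : x + t = (σ ⟨x, hx⟩ : EuclideanSpace ℝ (Fin p)) := by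
          rw [← hdx]; abel
        rw [this]; exact (σ ⟨x, hx⟩).2
    · rw [htval]
      have h6 := hσ ⟨a₀, ha₀⟩
      have heq : (σ ⟨a₀, ha₀⟩ : EuclideanSpace ℝ (Fin p)) - a₀ - τ
          = -(a₀ + τ - (σ ⟨a₀, ha₀⟩ : EuclideanSpace ℝ (Fin p))) := by abel
      rw [heq, norm_neg]; exact h6
  -- the period group is relatively dense
  obtain ⟨R₂, hR₂⟩ := hap ε hεpos
  set Rd : ℝ := |R₂| + ε with hRd
  have hRdpos : 0 < Rd := by positivity
  have hPdense : ∀ x : EuclideanSpace ℝ (Fin p), ∃ t ∈ periodGroup A, dist x t ≤ Rd := by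
    intro x
    obtain ⟨τ, hτ, hdist⟩ := hR₂ x
    obtain ⟨t, ht, htτ⟩ := key τ hτ
    refine ⟨t, ht, ?_⟩
    have h1 : dist x τ ≤ |R₂| := le_trans hdist (le_abs_self _)
    have h2 : dist τ t ≤ ε := by
      rw [dist_eq_norm, norm_sub_rev]; linarith
    calc dist x t ≤ dist x τ + dist τ t := dist_triangle _ _ _
      _ ≤ Rd := by rw [hRd]; linarith
  -- periods lie in A - A
  have hPsub : ∀ t ∈ periodGroup A, t ∈ A - A := by
    intro t ht
    have := Set.sub_mem_sub ((ht a₀).mpr ha₀) ha₀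
    simpa using this
  set Λ : Submodule ℤ (EuclideanSpace ℝ (Fin p)) :=
    AddSubgroup.toIntSubmodule (periodGroup A) with hΛ
  have hΛmem : ∀ {t : EuclideanSpace ℝ (Fin p)}, t ∈ Λ ↔ t ∈ periodGroup A := fun {t} => Iff.rfl
  -- Λ is discrete
  haveI hdiscΛ : DiscreteTopology Λ := by
    obtain ⟨δ₂, hδ₂pos, hδ₂⟩ :=
      exists_sep (hft.2 (Metric.closedBall 0 1) (isCompact_closedBall _ _))
    apply discreteTopology_iff_isOpen_singleton.mpr
    intro x
    have hset : ({x} : Set Λ) = Subtype.val ⁻¹' Metric.ball (x : EuclideanSpace ℝ (Fin p))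
        (min δ₂ 1) := by
      ext y
      simp only [Set.mem_singleton_iff, Set.mem_preimage, Metric.mem_ball]
      constructor
      · rintro rfl
        rw [dist_self]
        exact lt_min hδ₂pos one_pos
      · intro hy
        by_contra hne
        have hmemΛ : ((y : EuclideanSpace ℝ (Fin p)) - x) ∈ periodGroup A :=
          hΛmem.mp (Submodule.sub_mem Λ y.2 x.2)
        have hyxn : ‖(y : EuclideanSpace ℝ (Fin p)) - x‖ < min δ₂ 1 := by
          rw [← dist_eq_norm]; exact hy
        have h1 : ((y : EuclideanSpace ℝ (Fin p)) - x) ∈ (A - A) ∩ Metric.closedBall 0 1 := by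
          refine ⟨hPsub _ hmemΛ, ?_⟩
          rw [Metric.mem_closedBall, dist_zero_right]
          exact le_of_lt (lt_of_lt_of_le hyxn (min_le_right _ _))
        have h0 : (0 : EuclideanSpace ℝ (Fin p)) ∈ (A - A) ∩ Metric.closedBall 0 1 := by
          refine ⟨?_, by simp⟩
          simpa using Set.sub_mem_sub ha₀ ha₀
        have hne0 : (y : EuclideanSpace ℝ (Fin p)) - x ≠ 0 :=
          sub_ne_zero.2 (fun h => hne (Subtype.ext h))
        have hsep := hδ₂ _ h1 _ h0 hne0
        rw [dist_zero_right] at hsep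
        have := lt_of_lt_of_le hyxn (min_le_left _ _)
        linarith
    rw [hset]
    exact Metric.isOpen_ball.preimage continuous_subtype_val
  -- Λ spans the whole space
  haveI hzlat : IsZLattice ℝ Λ := by
    refine ⟨?_⟩
    by_contra hne
    have hbot : (Submodule.span ℝ (Λ : Set (EuclideanSpace ℝ (Fin p))))ᗮ ≠ ⊥ := by
      intro hb
      exact hne (Submodule.orthogonal_eq_bot_iff.mp hb)
    obtain ⟨w, hw, hw0⟩ := Submodule.exists_mem_ne_zero_of_ne_bot hbot
    have hwn : 0 < ‖w‖ := norm_pos_iff.mpr hw0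
    set c : ℝ := (Rd + 1) / ‖w‖ with hc
    obtain ⟨t, ht, hdist⟩ := hPdense (c • w)
    have htΛ : t ∈ (Λ : Set (EuclideanSpace ℝ (Fin p))) := hΛmem.mpr ht
    have h1 : inner ℝ t w = (0 : ℝ) :=
      (Submodule.mem_orthogonal _ w).mp hw t (Submodule.subset_span htΛ)
    have horth : inner ℝ (c • w) t = (0 : ℝ) := by
      rw [real_inner_smul_left, real_inner_comm, h1, mul_zero]
    have hnorm : ‖c • w‖ = Rd + 1 := by
      rw [norm_smul, Real.norm_eq_abs, hc, abs_of_nonneg (by positivity)]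
      field_simp
    have hsq : (Rd + 1) ^ 2 ≤ ‖c • w - t‖ ^ 2 := by
      rw [norm_sub_sq_real, horth, hnorm]
      nlinarith [sq_nonneg ‖t‖]
    have h2 : Rd + 1 ≤ ‖c • w - t‖ := by
      nlinarith [norm_nonneg (c • w - t)]
    rw [← dist_eq_norm] at h2
    linarith
  -- extract a basis
  haveI := ZLattice.module_finite ℝ Λ
  haveI := ZLattice.module_free ℝ Λ
  have hrank : Module.finrank ℤ Λ = p := by
    rw [ZLattice.rank ℝ Λ, finrank_euclideanSpace_fin]
  have hcard : Fintype.card (Module.Free.ChooseBasisIndex ℤ Λ) = p := by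
    rw [← Module.finrank_eq_card_chooseBasisIndex, hrank]
  set b : Module.Basis (Fin p) ℤ Λ :=
    (Module.Free.chooseBasis ℤ Λ).reindex (Fintype.equivFinOfCardEq hcard) with hb
  set bE : Module.Basis (Fin p) ℝ (EuclideanSpace ℝ (Fin p)) := b.ofZLatticeBasis ℝ Λ with hbE
  refine ⟨(Λ : Set (EuclideanSpace ℝ (Fin p))), A ∩ Metric.closedBall 0 Rd,
    ⟨fun i => bE i, bE.linearIndependent, ?_⟩, hdisc.2 _ (isCompact_closedBall _ _), ?_⟩
  · -- the coset set equals the set of integer combinations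
    ext x
    simp only [Set.mem_setOf_eq, SetLike.mem_coe]
    constructor
    · intro hx
      refine ⟨fun i => b.repr ⟨x, hx⟩ i, ?_⟩
      have hsum := b.sum_repr ⟨x, hx⟩
      calc x = ((∑ i, b.repr ⟨x, hx⟩ i • b i : Λ) : EuclideanSpace ℝ (Fin p)) := by
              rw [hsum]
        _ = ∑ i, ((b.repr ⟨x, hx⟩ i • b i : Λ) : EuclideanSpace ℝ (Fin p)) := by
              exact map_sum Λ.subtype (fun i => b.repr ⟨x, hx⟩ i • b i) Finset.univ
        _ = ∑ i, (b.repr ⟨x, hx⟩ i : ℝ) • bE i := by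
              refine Finset.sum_congr rfl fun i _ => ?_
              rw [Submodule.coe_smul, Int.cast_smul_eq_zsmul ℝ,
                b.ofZLatticeBasis_apply ℝ Λ i]
    · rintro ⟨n, rfl⟩
      refine Submodule.sum_mem _ fun i _ => ?_
      have hmem : bE i ∈ Λ := by
        rw [hbE, b.ofZLatticeBasis_apply ℝ Λ i]
        exact SetLike.coe_mem (b i)
      rw [Int.cast_smul_eq_zsmul ℝ]
      exact Submodule.smul_mem' Λ (n i) hmem
  · -- A = Λ + F
    ext x
    constructor
    · intro hx
      obtain ⟨t, ht, hdist⟩ := hPdense x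
      refine Set.mem_add.mpr ⟨t, hΛmem.mpr ht, x - t, ⟨?_, ?_⟩, by abel⟩
      · have h7 := ht (x - t)
        rw [sub_add_cancel] at h7
        exact h7.mp hx
      · rw [Metric.mem_closedBall, dist_zero_right, ← dist_eq_norm]
        exact hdist
    · intro hx
      obtain ⟨t, htΛ, f, ⟨hfA, -⟩, rfl⟩ := Set.mem_add.mp hx
      have ht : t ∈ periodGroup A := hΛmem.mp htΛ
      have := (ht f).mpr hfA
      rwa [add_comm] at this

end
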